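/- Let R be a commutative ring, J ⊂ R an ideal generated by a regular sequence, with R/J a domain. If R is graded with trivial intersection ⋂_n Jⁿ = 0, then R itself is a domain. -/

import Mathlib

open MvPolynomial

namespace ReesQR

variable {R : Type*} [CommRing R] {k : ℕ}

noncomputable def Jn (y : Fin k → R) (j : ℕ) : Ideal R :=
  Ideal.span (y '' {i : Fin k | (i : ℕ) < j})

def Vlt (j : ℕ) (F : MvPolynomial (Fin k) R) : Prop :=
  ∀ m : Fin k →₀ ℕ, F.coeff m ≠ 0 → ∀ i : Fin k, m i ≠ 0 → (i : ℕ) < j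

lemma degree_add (a b : Fin k →₀ ℕ) : (a + b).degree = a.degree + b.degree := by
  classical
  exact map_add Finsupp.degree a b

lemma degree_single (i : Fin k) : (Finsupp.single i 1 : Fin k →₀ ℕ).degree = 1 := by
  classical
  exact Finsupp.degree_single i 1

lemma Jn_mono (y : Fin k → R) {j j' : ℕ} (h : j ≤ j') : Jn y j ≤ Jn y j' :=
  Ideal.span_mono (Set.image_mono fun i hi => lt_of_lt_of_le hi h)

lemma y_mem_Jn (y : Fin k → R) {i : Fin k} {j : ℕ} (h : (i : ℕ) < j) : y i ∈ Jn y j :=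
  Ideal.subset_span ⟨i, h, rfl⟩

lemma Vlt.mono {j j' : ℕ} {F : MvPolynomial (Fin k) R} (h : Vlt j F) (hle : j ≤ j') :
    Vlt j' F := fun m hm i hi => lt_of_lt_of_le (h m hm i hi) hle

lemma Vlt.add {j : ℕ} {F G : MvPolynomial (Fin k) R} (hF : Vlt j F) (hG : Vlt j G) :
    Vlt j (F + G) := by
  intro m hm i hi
  rw [coeff_add] at hm
  rcases ne_or_eq (F.coeff m) 0 with h | h
  · exact hF m h i hi
  · exact hG m (by rintro h'; rw [h, h', add_zero] at hm; exact hm rfl) i hi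

lemma Vlt.neg {j : ℕ} {F : MvPolynomial (Fin k) R} (hF : Vlt j F) : Vlt j (-F) := by
  intro m hm i hi
  rw [coeff_neg, neg_ne_zero] at hm
  exact hF m hm i hi

lemma Vlt.sub {j : ℕ} {F G : MvPolynomial (Fin k) R} (hF : Vlt j F) (hG : Vlt j G) :
    Vlt j (F - G) := by
  rw [sub_eq_add_neg]; exact hF.add hG.neg

lemma Vlt.mul {j : ℕ} {F G : MvPolynomial (Fin k) R} (hF : Vlt j F) (hG : Vlt j G) :
    Vlt j (F * G) := by
  classical
  intro m hm i hi
  have hmem : m ∈ (F * G).support := by rwa [mem_support_iff]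
  have := MvPolynomial.support_mul F G hmem
  rw [Finset.mem_add] at this
  obtain ⟨a, ha, b, hb, rfl⟩ := this
  have : a i ≠ 0 ∨ b i ≠ 0 := by
    by_contra hc
    push_neg at hc
    simp [Finsupp.add_apply, hc.1, hc.2] at hi
  rcases this with h | h
  · exact hF a (by rwa [mem_support_iff] at ha) i h
  · exact hG b (by rwa [mem_support_iff] at hb) i h

lemma Vlt.C (j : ℕ) (r : R) : Vlt j (MvPolynomial.C r : MvPolynomial (Fin k) R) := by
  intro m hm i hi
  rw [coeff_C] at hm
  split_ifs at hm with h
  · subst h; simp at hi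
  · exact absurd rfl hm

lemma prod_pow_mem (I : Ideal R) (v : Fin k → R) (s : Finset (Fin k)) (m : Fin k → ℕ)
    (h : ∀ a ∈ s, v a ∈ I) : (∏ i ∈ s, v i ^ m i) ∈ I ^ (∑ i ∈ s, m i) := by
  classical
  induction s using Finset.induction_on with
  | empty => simpa using Submodule.mem_top
  | @insert a s hni ih =>
    rw [Finset.prod_insert hni, Finset.sum_insert hni, pow_add]
    exact Ideal.mul_mem_mul (Ideal.pow_mem_pow (h a (Finset.mem_insert_self a s)) _)
      (ih fun b hb => h b (Finset.mem_insert_of_mem hb))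

lemma eval_mem_pow (y : Fin k → R) {j d e : ℕ} {F : MvPolynomial (Fin k) R}
    (hF : F.IsHomogeneous d) (hV : Vlt j F)
    (hc : ∀ m, F.coeff m ∈ (Jn y j) ^ e) :
    eval y F ∈ (Jn y j) ^ (d + e) := by
  classical
  rw [eval_eq]
  refine Ideal.sum_mem _ fun m hm => ?_
  have hcm : F.coeff m ≠ 0 := by rwa [mem_support_iff] at hm
  have hdeg : m.degree = d := by
    have := hF hcm
    rwa [show (Finsupp.weight 1 : (Fin k →₀ ℕ) →+ ℕ) = Finsupp.degree from Finsupp.degree_eq_weight_one.symm] at this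
  have hprod : (∏ i ∈ m.support, y i ^ m i) ∈ (Jn y j) ^ d := by
    have := prod_pow_mem (Jn y j) y m.support m
      (fun a ha => y_mem_Jn y (hV m hcm a (Finsupp.mem_support_iff.mp ha)))
    rwa [show (∑ i ∈ m.support, m i) = d from hdeg] at this
  rw [add_comm d e, pow_add]
  exact Ideal.mul_mem_mul (hc m) hprod

/-- every element of `Jn^1` is the value of a linear form in the allowed variables -/
lemma exists_rep_one (y : Fin k → R) {j : ℕ} {a : R} (ha : a ∈ Jn y j) :
    ∃ P : MvPolynomial (Fin k) R, P.IsHomogeneous 1 ∧ Vlt j P ∧ eval y P = a := by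
  refine Submodule.span_induction ?_ ?_ ?_ ?_ ha
  · rintro x ⟨i, hi, rfl⟩
    refine ⟨X i, isHomogeneous_X _ _, ?_, by simp⟩
    intro m hm i' hi'
    rw [coeff_X'] at hm
    split_ifs at hm with h
    · subst h
      have : i = i' := by
        by_contra hne
        simp [Finsupp.single_apply, hne] at hi'
      subst this; exact hi
    · exact absurd rfl hm
  · exact ⟨0, isHomogeneous_zero _ _ _, fun m hm => by simp at hm, by simp⟩
  · rintro x z - - ⟨P, hP, hVP, hEP⟩ ⟨Q, hQ, hVQ, hEQ⟩
    exact ⟨P + Q, hP.add hQ, hVP.add hVQ, by simp [hEP, hEQ]⟩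
  · rintro r x - ⟨P, hP, hVP, hEP⟩
    refine ⟨MvPolynomial.C r * P, by simpa using hP.C_mul r, (Vlt.C j r).mul hVP, by
      simp [hEP, smul_eq_mul]⟩

/-- every element of `Jn^d` is the value of a homogeneous form of degree `d` -/
lemma exists_rep (y : Fin k → R) {j : ℕ} : ∀ {d : ℕ} {a : R}, a ∈ (Jn y j) ^ d →
    ∃ F : MvPolynomial (Fin k) R, F.IsHomogeneous d ∧ Vlt j F ∧ eval y F = a := by
  intro d
  induction d with
  | zero =>
    intro a _
    exact ⟨MvPolynomial.C a, isHomogeneous_C _ _, Vlt.C _ _, by simp⟩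
  | succ d ih =>
    intro a ha
    rw [pow_succ] at ha
    refine Submodule.mul_induction_on ha ?_ ?_
    · intro x hx z hz
      obtain ⟨F, hF, hVF, hEF⟩ := ih hx
      obtain ⟨P, hP, hVP, hEP⟩ := exists_rep_one y hz
      exact ⟨F * P, hF.mul hP, hVF.mul hVP, by simp [hEF, hEP]⟩
    · rintro x z ⟨F, hF, hVF, hEF⟩ ⟨G, hG, hVG, hEG⟩
      exact ⟨F + G, hF.add hG, hVF.add hVG, by simp [hEF, hEG]⟩

/-- every element of `Jn^(d+1)` is the value of a homogeneous form of degree `d`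
with coefficients in `Jn` -/
lemma exists_rep' (y : Fin k → R) {j d : ℕ} {a : R} (ha : a ∈ (Jn y j) ^ (d + 1)) :
    ∃ F : MvPolynomial (Fin k) R, F.IsHomogeneous d ∧ Vlt j F ∧
      (∀ m, F.coeff m ∈ Jn y j) ∧ eval y F = a := by
  rw [pow_succ] at ha
  refine Submodule.mul_induction_on ha ?_ ?_
  · intro x hx z hz
    obtain ⟨F, hF, hVF, hEF⟩ := exists_rep y hx
    refine ⟨MvPolynomial.C z * F, by simpa using hF.C_mul z,
      (Vlt.C _ _).mul hVF, fun m => ?_, by simp [hEF]; ring⟩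
    rw [MvPolynomial.coeff_C_mul]
    exact Ideal.mul_mem_right _ _ hz
  · rintro x z ⟨F, hF, hVF, hcF, hEF⟩ ⟨G, hG, hVG, hcG, hEG⟩
    exact ⟨F + G, hF.add hG, hVF.add hVG,
      fun m => by rw [coeff_add]; exact Ideal.add_mem _ (hcF m) (hcG m),
      by simp [hEF, hEG]⟩

end ReesQR

namespace ReesQR

variable {R : Type*} [CommRing R] {k : ℕ}

lemma eq_C_of_coeff (F : MvPolynomial (Fin k) R) (h : ∀ m, F.coeff m ≠ 0 → m = 0) :
    F = MvPolynomial.C (F.coeff 0) := by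
  ext m
  rw [coeff_C]
  split_ifs with hm
  · rw [← hm]
  · by_contra hne
    exact hm (h m hne).symm

theorem quasiRegular (y : Fin k → R)
    (Hc : ∀ i : Fin k, ∀ r : R, y i * r ∈ Jn y (i : ℕ) → r ∈ Jn y (i : ℕ)) :
    ∀ j, j ≤ k → ∀ d (F : MvPolynomial (Fin k) R), F.IsHomogeneous d → Vlt j F →
      eval y F ∈ (Jn y j) ^ (d + 1) → ∀ m, F.coeff m ∈ Jn y j := by
  intro j
  induction j with
  | zero =>
    intro _ d F hF hV hev m
    have hbot : Jn y 0 = ⊥ := by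
      unfold Jn
      convert Ideal.span_empty
      rw [Set.image_eq_empty]
      ext i; simp
    rw [hbot] at hev ⊢
    have hev0 : eval y F = 0 := by
      have := Ideal.pow_le_pow_right (I := (⊥ : Ideal R)) (Nat.one_le_iff_ne_zero.mpr
        (Nat.succ_ne_zero d)) hev
      simpa using this
    have hall : ∀ m', F.coeff m' ≠ 0 → m' = 0 := by
      intro m' hm'
      ext i
      by_contra hi
      exact absurd (hV m' hm' i hi) (Nat.not_lt_zero _)
    have hFC := eq_C_of_coeff F hall
    rcases eq_or_ne m 0 with rfl | hm
    · rw [hFC, eval_C] at hev0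
      simp [hev0]
    · rcases ne_or_eq (F.coeff m) 0 with h | h
      · exact absurd (hall m h) hm
      · simp [h]
  | succ j ihj =>
    intro hjk
    have hjk' : j ≤ k := Nat.le_of_succ_le hjk
    set jj : Fin k := ⟨j, hjk⟩ with hjj
    have hreg' : ∀ r : R, y jj * r ∈ Jn y j → r ∈ Jn y j := fun r h => Hc jj r h
    have lemB : ∀ (d' : ℕ) (r : R), y jj * r ∈ (Jn y j) ^ d' → r ∈ (Jn y j) ^ d' := by
      intro d'
      induction d' with
      | zero => intro r _; simpa using Submodule.mem_top
      | succ e ihe =>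
        intro r h
        have hr : r ∈ (Jn y j) ^ e := ihe r (Ideal.pow_le_pow_right (Nat.le_succ e) h)
        obtain ⟨F', hF', hVF', hEF'⟩ := exists_rep y hr
        have hcoef : ∀ m, F'.coeff m ∈ Jn y j := by
          intro m
          have := ihj hjk' e (MvPolynomial.C (y jj) * F') (by simpa using hF'.C_mul _)
            ((Vlt.C _ _).mul hVF') (by rw [eval_mul, eval_C, hEF']; exact h) m
          rw [coeff_C_mul] at this
          exact hreg' _ this
        have := eval_mem_pow y hF' hVF' (e := 1) (fun m => by
          rw [pow_one]; exact hcoef m)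
        rwa [hEF'] at this
    intro d
    induction d using Nat.strong_induction_on with
    | _ d ihd =>
    intro F hF hV hev m
    obtain ⟨F', hF', hV', hc', hE'⟩ := exists_rep' y hev
    have hmain : ∀ (F₀ : MvPolynomial (Fin k) R), F₀.IsHomogeneous d → Vlt (j+1) F₀ →
        eval y F₀ = 0 → ∀ m', F₀.coeff m' ∈ Jn y (j+1) := by
      intro F₀ hF₀ hV₀ hE₀ m'
      match d, hF₀, ihd with
      | 0, hF₀, _ =>
        have hall : ∀ m'', F₀.coeff m'' ≠ 0 → m'' = 0 := by
          intro m'' hm''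
          have := hF₀ hm''
          rw [show (Finsupp.weight 1 : (Fin k →₀ ℕ) →+ ℕ) = Finsupp.degree from Finsupp.degree_eq_weight_one.symm, Finsupp.degree_eq_zero_iff] at this
          exact this
        have hFC := eq_C_of_coeff F₀ hall
        rw [hFC, eval_C] at hE₀
        rcases eq_or_ne m' 0 with rfl | hm'
        · rw [hE₀]; exact Ideal.zero_mem _
        · rcases ne_or_eq (F₀.coeff m') 0 with h | h
          · exact absurd (hall m' h) hm'
          · rw [h]; exact Ideal.zero_mem _
      | (e+1), hF₀, ihd =>
        classical
        set s : Fin k →₀ ℕ := Finsupp.single jj 1 with hs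
        set G := F₀.modMonomial s with hGdef
        set Hh := F₀.divMonomial s with hHdef
        have hdec : monomial s 1 * Hh + G = F₀ := F₀.divMonomial_add_modMonomial s
        have hcoeffG : ∀ m'', G.coeff m'' ≠ 0 → (¬ s ≤ m'') ∧ G.coeff m'' = F₀.coeff m'' := by
          intro m'' hm''
          by_cases hle : s ≤ m''
          · rw [hGdef, coeff_modMonomial_of_le _ hle] at hm''
            exact absurd rfl hm''
          · exact ⟨hle, by rw [hGdef, coeff_modMonomial_of_not_le _ hle]⟩
        have hGhom : G.IsHomogeneous (e+1) := by
          intro m'' hm''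
          exact hF₀ (by rw [← (hcoeffG m'' hm'').2]; exact hm'')
        have hGvlt : Vlt j G := by
          intro m'' hm'' i hi
          obtain ⟨hnle, hGF⟩ := hcoeffG m'' hm''
          have hlt := hV₀ m'' (by rwa [← hGF]) i hi
          rcases Nat.lt_succ_iff_lt_or_eq.mp hlt with h | h
          · exact h
          · exfalso
            have : i = jj := Fin.ext h
            subst this
            exact hnle (by rw [hs]; exact Finsupp.single_le_iff.mpr (Nat.one_le_iff_ne_zero.mpr hi))
        have hHhom : Hh.IsHomogeneous e := by
          intro m'' hm''
          rw [hHdef, coeff_divMonomial] at hm''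
          have := hF₀ hm''
          rw [show (Finsupp.weight 1 : (Fin k →₀ ℕ) →+ ℕ) = Finsupp.degree from Finsupp.degree_eq_weight_one.symm] at this ⊢
          rw [degree_add, degree_single] at this
          omega
        have hHvlt : Vlt (j+1) Hh := by
          intro m'' hm'' i hi
          rw [hHdef, coeff_divMonomial] at hm''
          refine hV₀ (s + m'') hm'' i ?_
          simp only [Finsupp.add_apply]
          omega
        have hEq : eval y Hh * y jj + eval y G = 0 := by
          have := congrArg (eval y) hdec
          rw [map_add, hE₀] at this
          rw [← this]
          rw [map_mul, eval_monomial, hs]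
          simp [Finsupp.prod_single_index, mul_comm]
        have hGmem : eval y G ∈ (Jn y j) ^ (e+1) := by
          have := eval_mem_pow y hGhom hGvlt (e := 0) (fun m'' => by
            rw [pow_zero, Ideal.one_eq_top]; exact Submodule.mem_top)
          simpa using this
        have hyH : y jj * eval y Hh ∈ (Jn y j) ^ (e+1) := by
          have heq2 : y jj * eval y Hh = - eval y G := by linear_combination hEq
          rw [heq2]
          exact Submodule.neg_mem _ hGmem
        have hHmem : eval y Hh ∈ (Jn y j) ^ (e+1) := lemB (e+1) _ hyH
        -- coefficients of Hh
        have hHcoeff : ∀ m'', Hh.coeff m'' ∈ Jn y (j+1) := by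
          intro m''
          refine ihd e (Nat.lt_succ_self e) Hh hHhom hHvlt ?_ m''
          exact Ideal.pow_right_mono (Jn_mono y (Nat.le_succ j)) (e+1) hHmem
        -- coefficients of G
        have hGcoeff : ∀ m'', G.coeff m'' ∈ Jn y (j+1) := by
          obtain ⟨K, hK, hKvlt, hKE⟩ := exists_rep y hHmem
          have hG' : ∀ m'', (G + MvPolynomial.C (y jj) * K).coeff m'' ∈ Jn y j := by
            refine ihj hjk' (e+1) _ (hGhom.add (by simpa using hK.C_mul _))
              (hGvlt.add ((Vlt.C _ _).mul hKvlt)) ?_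
            have : eval y (G + MvPolynomial.C (y jj) * K) = 0 := by
              rw [map_add, map_mul, eval_C, hKE]
              linear_combination hEq
            rw [this]
            exact Ideal.zero_mem _
          intro m''
          have : G.coeff m'' = (G + MvPolynomial.C (y jj) * K).coeff m''
              - y jj * K.coeff m'' := by
            rw [coeff_add, coeff_C_mul]; ring
          rw [this]
          refine Submodule.sub_mem _ (Jn_mono y (Nat.le_succ j) (hG' m'')) ?_
          exact Ideal.mul_mem_right _ _ (y_mem_Jn y (by simp [hjj]))
        -- assemble
        have : F₀.coeff m' = (Hh * monomial s 1).coeff m' + G.coeff m' := by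
          rw [← hdec, coeff_add, mul_comm]
        rw [this]
        refine Submodule.add_mem _ ?_ (hGcoeff m')
        rw [coeff_mul_monomial']
        split_ifs with hle
        · rw [mul_one]; exact hHcoeff _
        · exact Ideal.zero_mem _
    have hsplit : F.coeff m = (F - F').coeff m + F'.coeff m := by
      rw [coeff_sub]; ring
    rw [hsplit]
    exact Submodule.add_mem _
      (hmain (F - F') (hF.sub hF') (hV.sub hV')
        (by rw [map_sub, hE', sub_self]) m)
      (hc' m)

end ReesQR

namespace ReesQR

variable {R : Type*} [CommRing R] {k : ℕ}

lemma smul_top_eq (I : Ideal R) : (I • ⊤ : Submodule R R) = I := by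
  apply le_antisymm
  · rw [Submodule.smul_le]
    intro r hr m _
    simpa [smul_eq_mul] using I.mul_mem_right m hr
  · intro x hx
    simpa using Submodule.smul_mem_smul hx (Submodule.mem_top (x := (1 : R)))

lemma ofList_eq_span (l : List R) : Ideal.ofList l = Ideal.span {a | a ∈ l} := by
  induction l with
  | nil => simp
  | cons r t ih =>
    rw [Ideal.ofList_cons, ih, show {a | a ∈ r :: t} = {r} ∪ {a | a ∈ t} by ext a; simp,
      Ideal.span_union]

lemma ofList_take (y : Fin k → R) (i : ℕ) (hi : i ≤ k) :
    Ideal.ofList ((List.ofFn y).take i) = Jn y i := by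
  rw [← Fin.ofFn_take_eq_take_ofFn hi y, ofList_eq_span]
  unfold Jn
  congr 1
  ext a
  simp only [List.mem_ofFn, Set.mem_range, Set.mem_image, Set.mem_setOf_eq]
  constructor
  · rintro ⟨j, rfl⟩
    exact ⟨Fin.castLE hi j, j.isLt, rfl⟩
  · rintro ⟨t, ht, rfl⟩
    exact ⟨⟨t.1, ht⟩, rfl⟩

end ReesQR

open ReesQR

/-- let `R` be a commutative ring and `J ⊂ R` a proper ideal
generated by a regular sequence, with `R/J` a domain.  If `R` is graded (by
`𝒜`) and the intersection `⋂ₙ Jⁿ` is trivial, then `R` itself is a domain. -/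
theorem isDomain_of_adic
    {R : Type*} [CommRing R]
    (𝒜 : ℕ → AddSubgroup R) [GradedRing 𝒜]
    (kk : ℕ) (y : Fin kk → R)
    (hreg : RingTheory.Sequence.IsRegular R (List.ofFn y))
    (J : Ideal R) (hJ : J = Ideal.span (Set.range y))
    (hint : (⨅ n : ℕ, J ^ n) = ⊥)
    (hdom : IsDomain (R ⧸ J)) :
    IsDomain R := by
  classical
  haveI := hdom
  have hJn : J = Jn y kk := by
    rw [hJ]
    unfold Jn
    have hset : Set.range y = y '' {i : Fin kk | (i : ℕ) < kk} := by
      ext a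
      simp only [Set.mem_image, Set.mem_range, Set.mem_setOf_eq]
      exact ⟨fun ⟨i, hi⟩ => ⟨i, i.isLt, hi⟩, fun ⟨i, _, hi⟩ => ⟨i, hi⟩⟩
    rw [hset]
  -- the chain condition from regularity
  have Hc : ∀ i : Fin kk, ∀ r : R, y i * r ∈ Jn y (i : ℕ) → r ∈ Jn y (i : ℕ) := by
    intro i r h
    have hi : (i : ℕ) < (List.ofFn y).length := by simpa using i.isLt
    have hr := hreg.toIsWeaklyRegular.regular_mod_prev (i : ℕ) hi
    rw [ofList_take y (i : ℕ) (le_of_lt i.isLt)] at hr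
    have hget : (List.ofFn y)[(i : ℕ)]'hi = y i := by simp
    rw [hget] at hr
    have h0 : y i • (Submodule.Quotient.mk r :
        R ⧸ (Jn y (i : ℕ) • ⊤ : Submodule R R)) = y i • (0 : _) := by
      rw [smul_zero, ← Submodule.Quotient.mk_smul, Submodule.Quotient.mk_eq_zero,
        smul_top_eq, smul_eq_mul]
      exact h
    have := hr h0
    rwa [Submodule.Quotient.mk_eq_zero, smul_top_eq] at this
  -- nontriviality
  haveI : Nontrivial R := by
    refine ⟨0, 1, fun h01 => ?_⟩
    have : (0 : R ⧸ J) = 1 := by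
      simpa using congrArg (Ideal.Quotient.mk J) h01
    exact zero_ne_one this
  -- maximal powers
  have hmax : ∀ a : R, a ≠ 0 → ∃ n, a ∈ J ^ n ∧ a ∉ J ^ (n + 1) := by
    intro a ha
    have hex : ∃ n, a ∉ J ^ (n + 1) := by
      by_contra hc
      push_neg at hc
      have hmem : a ∈ ⨅ n : ℕ, J ^ n := by
        rw [Submodule.mem_iInf]
        intro n
        match n with
        | 0 => simp [Ideal.one_eq_top]
        | n + 1 => exact hc n
      rw [hint] at hmem
      exact ha (by simpa using hmem)
    refine ⟨Nat.find hex, ?_, Nat.find_spec hex⟩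
    rcases h0 : Nat.find hex with _ | n'
    · simp [Ideal.one_eq_top]
    · have := Nat.find_min hex (show n' < Nat.find hex by omega)
      push_neg at this
      exact this
  haveI : NoZeroDivisors R := by
    refine ⟨@fun a b hab => ?_⟩
    by_contra hc
    push_neg at hc
    obtain ⟨ha, hb⟩ := hc
    obtain ⟨m, hma, hma'⟩ := hmax a ha
    obtain ⟨n, hnb, hnb'⟩ := hmax b hb
    rw [hJn] at hma hnb
    obtain ⟨F, hFh, hFv, hFE⟩ := exists_rep y hma
    obtain ⟨G, hGh, hGv, hGE⟩ := exists_rep y hnb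
    have hcoeffs : ∀ m', (F * G).coeff m' ∈ Jn y kk := by
      refine quasiRegular y Hc kk le_rfl (m + n) (F * G) (hFh.mul hGh) (hFv.mul hGv) ?_
      rw [map_mul, hFE, hGE, hab]
      exact Ideal.zero_mem _
    have hmapz : (MvPolynomial.map (Ideal.Quotient.mk J)) F *
        (MvPolynomial.map (Ideal.Quotient.mk J)) G = 0 := by
      rw [← map_mul]
      ext m'
      rw [MvPolynomial.coeff_map, MvPolynomial.coeff_zero]
      refine Ideal.Quotient.eq_zero_iff_mem.mpr ?_
      rw [hJn]
      exact hcoeffs m'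
    rcases mul_eq_zero.mp hmapz with h | h
    · have hcF : ∀ m', F.coeff m' ∈ (Jn y kk) ^ 1 := by
        intro m'
        rw [pow_one, ← hJn]
        refine Ideal.Quotient.eq_zero_iff_mem.mp ?_
        rw [← MvPolynomial.coeff_map, h, MvPolynomial.coeff_zero]
      have := eval_mem_pow y hFh hFv hcF
      rw [hFE, ← hJn] at this
      exact hma' this
    · have hcG : ∀ m', G.coeff m' ∈ (Jn y kk) ^ 1 := by
        intro m'
        rw [pow_one, ← hJn]
        refine Ideal.Quotient.eq_zero_iff_mem.mp ?_
        rw [← MvPolynomial.coeff_map, h, MvPolynomial.coeff_zero]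
      have := eval_mem_pow y hGh hGv hcG
      rw [hGE, ← hJn] at this
      exact hnb' this
  exact NoZeroDivisors.to_isDomain R
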